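/- Fix an integer d ≥ 2 and k ∈ (−π,π)^d such that (d·D̂(k))² = 2d−1, and let λ = d·D̂(k) be the corresponding double root of λ² = 2d·D̂(k)·λ − (2d−1). Then A[k]·1⃗ = (λ·1⃗ − D[k]·1⃗) + λ·1⃗, and consequently for every n ≥ 1: b⃗_n(k) = (n+1)·λ^n·1⃗ − n·λ^{n−1}·D[k]·1⃗, and for every n ≥ 2: b̂_n(k) = 2d·[ n·D̂(k)·λ^{n−1} − (n−1)·λ^{n−2} ]. -/

import Mathlib

open scoped BigOperators
open Matrix

noncomputable section

/-- The index set `I = {-d, …, -1, 1, …, d}`. -/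
def Idx (d : ℕ) : Finset ℤ := (Finset.Icc (-(d : ℤ)) d).erase 0

lemma mem_Idx {d : ℕ} {ι : ℤ} (h : ι ∈ Idx d) : ι ≠ 0 ∧ -(d : ℤ) ≤ ι ∧ ι ≤ d := by
  simpa [Idx, Finset.mem_erase, Finset.mem_Icc, and_assoc] using h

lemma mem_Idx' {d : ℕ} {ι : ℤ} (h1 : ι ≠ 0) (h2 : -(d : ℤ) ≤ ι) (h3 : ι ≤ d) :
    ι ∈ Idx d := by
  simp [Idx, Finset.mem_erase, Finset.mem_Icc]; omega

/-- `k_ι = sign(ι) · k_{|ι|}` (with `|ι| ∈ {1,…,d}` re-indexed as `Fin d`). -/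
def kc {d : ℕ} (k : Fin d → ℝ) (ι : Idx d) : ℝ :=
  (ι.1.sign : ℝ) * k ⟨ι.1.natAbs - 1, by
    obtain ⟨h1, h2, h3⟩ := mem_Idx ι.2; omega⟩

/-- The negation `-ι` as an element of the index set. -/
def negIdx {d : ℕ} (ι : Idx d) : Idx d :=
  ⟨-ι.1, by obtain ⟨h1, h2, h3⟩ := mem_Idx ι.2; exact mem_Idx' (by omega) (by omega) (by omega)⟩

/-- The coordinate vector `e⃗_ι ∈ ℂ^I`. -/
def eVec {d : ℕ} (ι : Idx d) : Idx d → ℂ := fun κ => if κ = ι then 1 else 0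

/-- The unit step `e_ι = sign(ι)·(basis vector |ι|)` in `ℤ^d`. -/
def stepVec {d : ℕ} (ι : Idx d) : Fin d → ℤ :=
  fun j => if (j : ℕ) = ι.1.natAbs - 1 then ι.1.sign else 0

/-- The all-ones matrix `C`. -/
def matC (d : ℕ) : Matrix (Idx d) (Idx d) ℂ := Matrix.of fun _ _ => 1

/-- The matrix `J` with `J_{ι,κ} = δ_{ι,-κ}`. -/
def matJ (d : ℕ) : Matrix (Idx d) (Idx d) ℂ :=
  Matrix.of fun ι κ => if ι.1 = -κ.1 then 1 else 0

/-- The diagonal matrix `D[k]` with entries `e^{i k_ι}`. -/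
def matD {d : ℕ} (k : Fin d → ℝ) : Matrix (Idx d) (Idx d) ℂ :=
  Matrix.diagonal fun ι => Complex.exp (Complex.I * (kc k ι : ℂ))

/-- The NBW transition matrix `A[k] = (C − J)·D[−k]`. -/
def matA {d : ℕ} (k : Fin d → ℝ) : Matrix (Idx d) (Idx d) ℂ :=
  (matC d - matJ d) * matD (-k)

/-- `ω` is an `n`-step nearest-neighbour non-backtracking walk on `ℤ^d`. -/
def IsNBW (d n : ℕ) (ω : Fin (n + 1) → (Fin d → ℤ)) : Prop :=
  ω 0 = 0 ∧
  (∀ i : ℕ, ∀ hi : i < n,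
    (∑ j, |ω ⟨i + 1, by omega⟩ j - ω ⟨i, by omega⟩ j|) = 1) ∧
  (∀ i : ℕ, ∀ hi : i + 2 ≤ n, ω ⟨i + 2, by omega⟩ ≠ ω ⟨i, by omega⟩)

/-- `b_n(x)`: the number of `n`-step NBWs ending at `x`. -/
def bc (d n : ℕ) (x : Fin d → ℤ) : ℕ :=
  Nat.card {ω : Fin (n + 1) → (Fin d → ℤ) // IsNBW d n ω ∧ ω (Fin.last n) = x}

/-- `b_n^ι(x)`: the number of `n`-step NBWs ending at `x` whose first step is not `e_ι`. -/
def bcRes (d n : ℕ) (ι : Idx d) (x : Fin d → ℤ) : ℕ :=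
  Nat.card {ω : Fin (n + 1) → (Fin d → ℤ) //
    IsNBW d n ω ∧ ω (Fin.last n) = x ∧ ∀ _ : 1 ≤ n, ω ⟨1, by omega⟩ ≠ stepVec ι}

/-- Fourier transform `f̂(k) = Σ_x f(x) e^{i k·x}` of a (finitely supported) `f : ℤ^d → ℕ`. -/
def fhat {d : ℕ} (f : (Fin d → ℤ) → ℕ) (k : Fin d → ℝ) : ℂ :=
  ∑' x : Fin d → ℤ, (f x : ℂ) * Complex.exp (Complex.I * ∑ j, (k j : ℂ) * (x j : ℂ))

/-- `b̂_n(k)`. -/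
def bhat (d n : ℕ) (k : Fin d → ℝ) : ℂ := fhat (bc d n) k

/-- `b⃗_n(k)`, the vector with entries `b̂_n^ι(k)`. -/
def bvec (d n : ℕ) (k : Fin d → ℝ) : Idx d → ℂ := fun ι => fhat (bcRes d n ι) k

/-- `D̂(k) = (1/d) Σ_j cos k_j`. -/
def Dhat {d : ℕ} (k : Fin d → ℝ) : ℝ := (1 / d) * ∑ j, Real.cos (k j)



namespace NBWaux

open Complex

variable {d : ℕ}

lemma negIdx_negIdx (ι : Idx d) : negIdx (negIdx ι) = ι := by
  simp [negIdx]

lemma kc_negIdx (k : Fin d → ℝ) (ι : Idx d) : kc k (negIdx ι) = -kc k ι := by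
  obtain ⟨h1, h2, h3⟩ := mem_Idx ι.2
  simp only [kc, negIdx, Int.sign_neg, Int.natAbs_neg, Int.cast_neg]
  ring

lemma kc_neg (k : Fin d → ℝ) (ι : Idx d) : kc (-k) ι = -kc k ι := by
  simp [kc]

def negIdxEquiv (d : ℕ) : Idx d ≃ Idx d where
  toFun := negIdx
  invFun := negIdx
  left_inv := negIdx_negIdx
  right_inv := negIdx_negIdx

def idxEquiv (d : ℕ) : Fin d ⊕ Fin d ≃ Idx d where
  toFun := Sum.elim
    (fun j => ⟨(j : ℤ) + 1, mem_Idx' (by omega) (by omega) (by exact_mod_cast Int.ofNat_le.2 j.2)⟩)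
    (fun j => ⟨-((j : ℤ) + 1), mem_Idx' (by omega) (by have := j.2; omega) (by omega)⟩)
  invFun := fun ι =>
    if h : 0 < ι.1 then Sum.inl ⟨ι.1.natAbs - 1, by obtain ⟨h1, h2, h3⟩ := mem_Idx ι.2; omega⟩
    else Sum.inr ⟨ι.1.natAbs - 1, by obtain ⟨h1, h2, h3⟩ := mem_Idx ι.2; omega⟩
  left_inv := by
    rintro (j | j) <;> dsimp only [Sum.elim_inl, Sum.elim_inr]
    · rw [dif_pos (by omega)]
      congr 1
      all_goals ext
      all_goals simp only [Int.natAbs_ofNat]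
      all_goals omega
    · rw [dif_neg (by omega)]
      congr 1
      all_goals ext
      all_goals simp only [Int.natAbs_neg]
      all_goals omega
  right_inv := by
    rintro ⟨ι, hι⟩
    obtain ⟨h1, h2, h3⟩ := mem_Idx hι
    dsimp only
    by_cases h : 0 < ι
    · rw [dif_pos h]
      dsimp only [Sum.elim_inl]
      ext
      simp only []
      omega
    · rw [dif_neg h]
      dsimp only [Sum.elim_inr]
      ext
      simp only []
      omega

lemma kc_pos (k : Fin d → ℝ) (j : Fin d) :
    kc k ((idxEquiv d) (Sum.inl j)) = k j := by
  simp only [idxEquiv, Equiv.coe_fn_mk, Sum.elim_inl, kc]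
  rw [Int.sign_eq_one_of_pos (by omega)]
  norm_num
  all_goals congr 1
  all_goals ext
  all_goals simp
  all_goals omega

lemma kc_negpos (k : Fin d → ℝ) (j : Fin d) :
    kc k ((idxEquiv d) (Sum.inr j)) = -k j := by
  simp only [idxEquiv, Equiv.coe_fn_mk, Sum.elim_inr, kc]
  rw [Int.sign_eq_neg_one_of_neg (by omega)]
  norm_num
  all_goals congr 1
  all_goals ext
  all_goals simp
  all_goals omega

lemma sum_exp_kc (hd : d ≠ 0) (k : Fin d → ℝ) :
    ∑ κ : Idx d, cexp (I * (kc k κ : ℂ)) = 2 * (((d : ℝ) * Dhat k : ℝ) : ℂ) := by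
  rw [← Fintype.sum_equiv (idxEquiv d) _ (fun κ => cexp (I * (kc k κ : ℂ))) (fun _ => rfl)]
  rw [Fintype.sum_sum_type]
  simp only [kc_pos, kc_negpos]
  have : ∀ j : Fin d, cexp (I * (k j : ℂ)) + cexp (I * ((-(k j) : ℝ) : ℂ))
      = 2 * ((Real.cos (k j) : ℝ) : ℂ) := by
    intro j
    rw [Complex.ofReal_cos, Complex.cos]
    push_cast
    ring_nf
  rw [← Finset.sum_add_distrib]
  simp only [this]
  rw [← Finset.mul_sum]
  simp only [Dhat]
  push_cast
  have hd0 : (d : ℂ) ≠ 0 := Nat.cast_ne_zero.mpr hd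
  field_simp
  all_goals ring

lemma sum_fin_ite {M : Type*} [AddCommMonoid M] {c : ℕ} (hc : c < d) (f : Fin d → M) :
    ∑ j : Fin d, (if (j : ℕ) = c then f j else 0) = f ⟨c, hc⟩ := by
  rw [Finset.sum_eq_single ⟨c, hc⟩]
  · simp
  · intro b _ hb
    rw [if_neg]
    intro hbc
    exact hb (Fin.ext hbc)
  · intro h; exact absurd (Finset.mem_univ _) h

lemma natAbs_lt (ι : Idx d) : ι.1.natAbs - 1 < d := by
  obtain ⟨h1, h2, h3⟩ := mem_Idx ι.2; omega

lemma sum_abs_stepVec (ι : Idx d) : ∑ j, |stepVec ι j| = 1 := by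
  have : ∀ j : Fin d, |stepVec ι j| = if (j : ℕ) = ι.1.natAbs - 1 then |ι.1.sign| else 0 := by
    intro j; simp only [stepVec]; split_ifs <;> simp
  simp only [this]
  rw [sum_fin_ite (natAbs_lt ι)]
  obtain ⟨h1, h2, h3⟩ := mem_Idx ι.2
  rcases Int.lt_or_lt_of_ne h1 with h | h
  · rw [Int.sign_eq_neg_one_of_neg h]; rfl
  · rw [Int.sign_eq_one_of_pos h]; rfl

lemma stepVec_injective : Function.Injective (stepVec (d := d)) := by
  intro ι κ h
  obtain ⟨h1, h2, h3⟩ := mem_Idx ι.2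
  obtain ⟨g1, g2, g3⟩ := mem_Idx κ.2
  have hι := congrFun h ⟨ι.1.natAbs - 1, natAbs_lt ι⟩
  simp only [stepVec, if_pos rfl, if_true, ite_true] at hι
  have hsι : ι.1.sign ≠ 0 := fun hs => h1 (Int.sign_eq_zero_iff_zero.1 hs)
  by_cases hc : (ι.1.natAbs - 1 : ℕ) = κ.1.natAbs - 1
  · rw [if_pos hc] at hι
    have hn : ι.1.natAbs = κ.1.natAbs := by omega
    apply Subtype.ext
    rw [← Int.sign_mul_natAbs ι.1, ← Int.sign_mul_natAbs κ.1, hι, hn]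
    all_goals simp_all
  · rw [if_neg hc] at hι
    exact absurd hι hsι

lemma stepVec_negIdx (ι : Idx d) : stepVec (negIdx ι) = -stepVec ι := by
  funext j
  simp only [stepVec, negIdx, Int.natAbs_neg, Int.sign_neg, Pi.neg_apply]
  split_ifs <;> simp

lemma exists_stepVec {y : Fin d → ℤ} (h : ∑ j, |y j| = 1) : ∃ κ : Idx d, y = stepVec κ := by
  have h0 : ∃ j0 : Fin d, y j0 ≠ 0 := by
    by_contra hc
    push_neg at hc
    simp [hc] at h
  obtain ⟨j0, hj0⟩ := h0
  have h1 : |y j0| = 1 ∧ ∀ j, j ≠ j0 → y j = 0 := by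
    have hmem : j0 ∈ Finset.univ := Finset.mem_univ j0
    have hsplit : |y j0| + ∑ j ∈ Finset.univ.erase j0, |y j| = 1 := by
      rw [← h]; exact Finset.add_sum_erase Finset.univ (fun j => |y j|) hmem
    have hrest : ∀ j ∈ Finset.univ.erase j0, 0 ≤ |y j| := fun j _ => abs_nonneg _
    have habs : 1 ≤ |y j0| := Int.one_le_abs hj0
    have hnn : 0 ≤ ∑ j ∈ Finset.univ.erase j0, |y j| := Finset.sum_nonneg hrest
    constructor
    · omega
    · intro j hj
      have : ∑ j ∈ Finset.univ.erase j0, |y j| = 0 := by omega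
      have := (Finset.sum_eq_zero_iff_of_nonneg hrest).1 this j (Finset.mem_erase.2 ⟨hj, Finset.mem_univ _⟩)
      exact abs_eq_zero.1 this
  obtain ⟨hy1, hyz⟩ := h1
  rcases (abs_eq (by norm_num : (0:ℤ) ≤ 1)).1 hy1 with hp | hm
  · refine ⟨(idxEquiv d) (Sum.inl j0), funext fun j => ?_⟩
    simp only [idxEquiv, Equiv.coe_fn_mk, Sum.elim_inl, stepVec]
    show y j = if (j : ℕ) = _ then _ else 0
    by_cases hj : j = j0
    · subst hj
      rw [if_pos (by omega), Int.sign_eq_one_of_pos (by omega)]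
      exact hp
    · rw [if_neg (fun hc => hj (Fin.ext (by omega)))]
      exact hyz j hj
  · refine ⟨(idxEquiv d) (Sum.inr j0), funext fun j => ?_⟩
    simp only [idxEquiv, Equiv.coe_fn_mk, Sum.elim_inr, stepVec]
    show y j = if (j : ℕ) = _ then _ else 0
    by_cases hj : j = j0
    · subst hj
      rw [if_pos (by omega), Int.sign_eq_neg_one_of_neg (by omega)]
      exact hm
    · rw [if_neg (fun hc => hj (Fin.ext (by omega)))]
      exact hyz j hj

lemma kdot_stepVec (k : Fin d → ℝ) (ι : Idx d) :
    ∑ j, (k j : ℂ) * (stepVec ι j : ℂ) = ((kc k ι : ℝ) : ℂ) := by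
  have : ∀ j : Fin d, (k j : ℂ) * (stepVec ι j : ℂ)
      = if (j : ℕ) = ι.1.natAbs - 1 then (k j : ℂ) * (ι.1.sign : ℂ) else 0 := by
    intro j; simp [stepVec, apply_ite (fun z : ℤ => (k j : ℂ) * (z : ℂ))]
  simp only [this]
  rw [sum_fin_ite (natAbs_lt ι)]
  simp [kc]
  push_cast
  ring

/-! ### Sequences of steps -/

def NonBack {d n : ℕ} (s : Fin (n + 1) → Idx d) : Prop :=
  ∀ i : ℕ, ∀ h : i + 1 ≤ n, s ⟨i + 1, by omega⟩ ≠ negIdx (s ⟨i, by omega⟩)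

def wt {d n : ℕ} (k : Fin d → ℝ) (s : Fin (n + 1) → Idx d) : ℂ :=
  ∏ i, cexp (I * ((kc k (s i) : ℝ) : ℂ))

open scoped Classical in
noncomputable def Tres (d n : ℕ) (k : Fin d → ℝ) (ι : Idx d) : ℂ :=
  ∑ s : Fin (n + 1) → Idx d, if NonBack s ∧ s 0 ≠ ι then wt k s else 0

open scoped Classical in
noncomputable def Tall (d n : ℕ) (k : Fin d → ℝ) : ℂ :=
  ∑ s : Fin (n + 1) → Idx d, if NonBack s then wt k s else 0

lemma cons_mk_succ {n : ℕ} (κ : Idx d) (t : Fin (n + 1) → Idx d) (i : ℕ) (h : i + 1 < n + 2) :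
    (Fin.cons κ t : Fin (n + 2) → Idx d) ⟨i + 1, h⟩ = t ⟨i, by omega⟩ := by
  have : (⟨i + 1, h⟩ : Fin (n + 2)) = Fin.succ ⟨i, by omega⟩ := rfl
  rw [this, Fin.cons_succ]

lemma nonBack_cons {n : ℕ} (κ : Idx d) (t : Fin (n + 1) → Idx d) :
    NonBack (Fin.cons κ t) ↔ t 0 ≠ negIdx κ ∧ NonBack t := by
  constructor
  · intro h
    refine ⟨?_, fun i hi => ?_⟩
    · have := h 0 (by omega)
      rwa [cons_mk_succ, show (⟨0, by omega⟩ : Fin (n + 2)) = 0 from rfl, Fin.cons_zero,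
        show (⟨0, by omega⟩ : Fin (n + 1)) = 0 from rfl] at this
    · have := h (i + 1) (by omega)
      rwa [cons_mk_succ, cons_mk_succ] at this
  · rintro ⟨h0, h⟩ i hi
    match i with
    | 0 =>
      rw [cons_mk_succ, show (⟨0, by omega⟩ : Fin (n + 2)) = 0 from rfl, Fin.cons_zero]
      exact (show (⟨0, by omega⟩ : Fin (n + 1)) = 0 from rfl) ▸ h0
    | Nat.succ m =>
      rw [cons_mk_succ, cons_mk_succ]
      exact h m (by omega)

lemma wt_cons {n : ℕ} (k : Fin d → ℝ) (κ : Idx d) (t : Fin (n + 1) → Idx d) :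
    wt k (Fin.cons κ t) = cexp (I * ((kc k κ : ℝ) : ℂ)) * wt k t := by
  unfold wt
  rw [Fin.prod_univ_succ]
  simp [Fin.cons_succ]

lemma sum_ite_ne {ι : Idx d} (f : Idx d → ℂ) :
    ∑ κ : Idx d, (if κ ≠ ι then f κ else 0) = (∑ κ : Idx d, f κ) - f ι := by
  classical
  have : ∀ κ : Idx d, (if κ ≠ ι then f κ else 0) = f κ - (if κ = ι then f κ else 0) := by
    intro κ; by_cases h : κ = ι <;> simp [h]
  simp only [this]
  rw [Finset.sum_sub_distrib, Finset.sum_ite_eq' Finset.univ ι f]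
  simp

lemma Tres_zero (k : Fin d → ℝ) (ι : Idx d) :
    Tres d 0 k ι = (∑ κ : Idx d, cexp (I * ((kc k κ : ℝ) : ℂ))) - cexp (I * ((kc k ι : ℝ) : ℂ)) := by
  classical
  rw [Tres, ← Equiv.sum_comp (Equiv.funUnique (Fin 1) (Idx d)).symm]
  rw [← sum_ite_ne (fun κ => cexp (I * ((kc k κ : ℝ) : ℂ)))]
  apply Finset.sum_congr rfl
  intro κ _
  have hnb : NonBack ((Equiv.funUnique (Fin 1) (Idx d)).symm κ) := by
    intro i hi; omega
  have h0 : ((Equiv.funUnique (Fin 1) (Idx d)).symm κ) 0 = κ := rfl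
  have hwt : wt k ((Equiv.funUnique (Fin 1) (Idx d)).symm κ) = cexp (I * ((kc k κ : ℝ) : ℂ)) := by
    simp [wt, Equiv.funUnique]
  by_cases h : κ = ι
  · rw [if_neg (by simp [hnb, h0, h]), if_neg (by simp [h])]
  · rw [if_pos ⟨hnb, by rw [h0]; exact h⟩, if_pos h, hwt]

lemma Tres_succ {n : ℕ} (k : Fin d → ℝ) (ι : Idx d) :
    Tres d (n + 1) k ι =
      ∑ κ : Idx d, (if κ ≠ ι then cexp (I * ((kc k κ : ℝ) : ℂ)) * Tres d n k (negIdx κ) else 0) := by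
  classical
  rw [Tres, ← Equiv.sum_comp (Fin.consEquiv (fun _ : Fin (n + 2) => Idx d)),
    Fintype.sum_prod_type]
  apply Finset.sum_congr rfl
  intro κ _
  by_cases h : κ = ι
  · rw [if_neg (by simp [h])]
    apply Finset.sum_eq_zero
    intro t _
    rw [if_neg]
    rintro ⟨-, hne⟩
    exact hne (by simpa [Fin.consEquiv] using h)
  · rw [if_pos h, Tres, Finset.mul_sum]
    apply Finset.sum_congr rfl
    intro t _
    have hc : (Fin.consEquiv (fun _ : Fin (n + 2) => Idx d)) (κ, t) = Fin.cons κ t := rfl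
    rw [hc, mul_ite, mul_zero, wt_cons]
    apply if_congr _ rfl rfl
    rw [nonBack_cons]
    constructor
    · rintro ⟨⟨ht0, hnb⟩, -⟩ ; exact ⟨hnb, ht0⟩
    · rintro ⟨hnb, ht0⟩; exact ⟨⟨ht0, hnb⟩, by simpa [Fin.cons_zero] using h⟩

lemma Tall_succ {n : ℕ} (k : Fin d → ℝ) :
    Tall d (n + 1) k =
      ∑ κ : Idx d, cexp (I * ((kc k κ : ℝ) : ℂ)) * Tres d n k (negIdx κ) := by
  classical
  rw [Tall, ← Equiv.sum_comp (Fin.consEquiv (fun _ : Fin (n + 2) => Idx d)),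
    Fintype.sum_prod_type]
  apply Finset.sum_congr rfl
  intro κ _
  rw [Tres, Finset.mul_sum]
  apply Finset.sum_congr rfl
  intro t _
  have hc : (Fin.consEquiv (fun _ : Fin (n + 2) => Idx d)) (κ, t) = Fin.cons κ t := rfl
  rw [hc, mul_ite, mul_zero, wt_cons]
  apply if_congr _ rfl rfl
  rw [nonBack_cons]
  exact ⟨fun ⟨a, b⟩ => ⟨b, a⟩, fun ⟨a, b⟩ => ⟨b, a⟩⟩

lemma card_Idx : Fintype.card (Idx d) = 2 * d := by
  rw [← Fintype.card_congr (idxEquiv d)]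
  simp [two_mul]

lemma exp_kc_mul_exp_kc_negIdx (k : Fin d → ℝ) (κ : Idx d) :
    cexp (I * ((kc k κ : ℝ) : ℂ)) * cexp (I * ((kc k (negIdx κ) : ℝ) : ℂ)) = 1 := by
  rw [kc_negIdx, Complex.ofReal_neg, ← Complex.exp_add]
  norm_num

lemma Tres_formula (hd : d ≠ 0) (k : Fin d → ℝ)
    (hl : (((d : ℝ) * Dhat k : ℝ) : ℂ) ^ 2 = 2 * d - 1) (n : ℕ) (ι : Idx d) :
    Tres d n k ι = ((n : ℂ) + 2) * (((d : ℝ) * Dhat k : ℝ) : ℂ) ^ (n + 1)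
      - ((n : ℂ) + 1) * (((d : ℝ) * Dhat k : ℝ) : ℂ) ^ n * cexp (I * ((kc k ι : ℝ) : ℂ)) := by
  set L : ℂ := (((d : ℝ) * Dhat k : ℝ) : ℂ) with hL
  induction n generalizing ι with
  | zero =>
    rw [Tres_zero, sum_exp_kc hd k, ← hL]
    push_cast
    ring
  | succ n ih =>
    rw [Tres_succ, sum_ite_ne (fun κ => cexp (I * ((kc k κ : ℝ) : ℂ)) * Tres d n k (negIdx κ))]
    simp only [ih]
    set A : ℂ := ((n : ℂ) + 2) * L ^ (n + 1) with hA
    set B : ℂ := ((n : ℂ) + 1) * L ^ n with hB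
    have key : ∑ κ : Idx d, cexp (I * ((kc k κ : ℝ) : ℂ)) *
        (A - B * cexp (I * ((kc k (negIdx κ) : ℝ) : ℂ)))
        = A * (2 * L) - B * (2 * d) := by
      have step1 : ∀ κ : Idx d, cexp (I * ((kc k κ : ℝ) : ℂ)) *
          (A - B * cexp (I * ((kc k (negIdx κ) : ℝ) : ℂ)))
          = A * cexp (I * ((kc k κ : ℝ) : ℂ)) -
            B * (cexp (I * ((kc k κ : ℝ) : ℂ)) * cexp (I * ((kc k (negIdx κ) : ℝ) : ℂ))) := by
        intro κ; ring
      simp only [step1, exp_kc_mul_exp_kc_negIdx, mul_one]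
      rw [Finset.sum_sub_distrib, ← Finset.mul_sum, sum_exp_kc hd k, ← hL, Finset.sum_const,
        Finset.card_univ, card_Idx]
      push_cast
      ring
    rw [key]
    have hι : cexp (I * ((kc k ι : ℝ) : ℂ)) *
        (A - B * cexp (I * ((kc k (negIdx ι) : ℝ) : ℂ)))
        = A * cexp (I * ((kc k ι : ℝ) : ℂ)) - B := by
      linear_combination (-B) * exp_kc_mul_exp_kc_negIdx k ι
    rw [hι, hA, hB]
    push_cast
    linear_combination ((n : ℂ) + 1) * L ^ n * hl

lemma Tall_formula (hd : d ≠ 0) (k : Fin d → ℝ)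
    (hl : (((d : ℝ) * Dhat k : ℝ) : ℂ) ^ 2 = 2 * d - 1) (n : ℕ) :
    Tall d (n + 1) k = 2 * ((n : ℂ) + 2) * (((d : ℝ) * Dhat k : ℝ) : ℂ) ^ (n + 2)
      - 2 * d * ((n : ℂ) + 1) * (((d : ℝ) * Dhat k : ℝ) : ℂ) ^ n := by
  set L : ℂ := (((d : ℝ) * Dhat k : ℝ) : ℂ) with hL
  rw [Tall_succ]
  simp only [Tres_formula hd k hl, ← hL]
  set A : ℂ := ((n : ℂ) + 2) * L ^ (n + 1) with hA
  set B : ℂ := ((n : ℂ) + 1) * L ^ n with hB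
  have step1 : ∀ κ : Idx d, cexp (I * ((kc k κ : ℝ) : ℂ)) *
      (A - B * cexp (I * ((kc k (negIdx κ) : ℝ) : ℂ)))
      = A * cexp (I * ((kc k κ : ℝ) : ℂ)) -
        B * (cexp (I * ((kc k κ : ℝ) : ℂ)) * cexp (I * ((kc k (negIdx κ) : ℝ) : ℂ))) := by
    intro κ; ring
  simp only [step1, exp_kc_mul_exp_kc_negIdx, mul_one]
  rw [Finset.sum_sub_distrib, ← Finset.mul_sum, sum_exp_kc hd k, ← hL, Finset.sum_const,
    Finset.card_univ, card_Idx]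
  push_cast
  ring

/-! ### From walks to step sequences -/

def walkOf {d n : ℕ} (s : Fin n → Idx d) : Fin (n + 1) → (Fin d → ℤ) :=
  fun i j => ∑ m : Fin n, if (m : ℕ) < (i : ℕ) then stepVec (s m) j else 0

lemma walkOf_zero {n : ℕ} (s : Fin n → Idx d) : walkOf s 0 = 0 := by
  funext j
  simp [walkOf]

lemma walkOf_succ {n : ℕ} (s : Fin n → Idx d) (i : ℕ) (h : i < n) :
    walkOf s ⟨i + 1, by omega⟩ = walkOf s ⟨i, by omega⟩ + stepVec (s ⟨i, h⟩) := by
  funext j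
  show _ = (_ : ℤ) + _
  simp only [walkOf]
  have hsplit : ∀ m : Fin n, (if (m : ℕ) < i + 1 then stepVec (s m) j else 0)
      = (if (m : ℕ) < i then stepVec (s m) j else 0) + (if (m : ℕ) = i then stepVec (s m) j else 0) := by
    intro m
    rcases lt_trichotomy (m : ℕ) i with hm | hm | hm
    · rw [if_pos (by omega), if_pos hm, if_neg (by omega), add_zero]
    · rw [if_pos (by omega), if_neg (by omega), if_pos hm, zero_add]
    · rw [if_neg (by omega), if_neg (by omega), if_neg (by omega), add_zero]
  simp only [hsplit]
  rw [Finset.sum_add_distrib]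
  congr 1
  exact sum_fin_ite (M := ℤ) h (fun m => stepVec (s m) j)

lemma walkOf_last {n : ℕ} (s : Fin n → Idx d) (j : Fin d) :
    walkOf s (Fin.last n) j = ∑ m : Fin n, stepVec (s m) j := by
  simp only [walkOf, Fin.last]
  apply Finset.sum_congr rfl
  intro m _
  rw [if_pos m.2]

lemma walkOf_injective {n : ℕ} : Function.Injective (walkOf (d := d) (n := n)) := by
  intro s t h
  funext i
  apply stepVec_injective
  have h1 := congrFun h ⟨(i : ℕ) + 1, by omega⟩
  have h2 := congrFun h ⟨(i : ℕ), by omega⟩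
  have e1 := walkOf_succ s (i : ℕ) i.2
  have e2 := walkOf_succ t (i : ℕ) i.2
  have : walkOf s ⟨(i : ℕ), by omega⟩ + stepVec (s ⟨(i : ℕ), i.2⟩)
      = walkOf t ⟨(i : ℕ), by omega⟩ + stepVec (t ⟨(i : ℕ), i.2⟩) := by
    rw [← e1, ← e2, h1]
  rw [h2] at this
  have := add_left_cancel this
  simpa [Fin.eta] using this

lemma isNBW_walkOf {n : ℕ} {s : Fin (n + 1) → Idx d} (hs : NonBack s) :
    IsNBW d (n + 1) (walkOf s) := by
  refine ⟨walkOf_zero s, fun i hi => ?_, fun i hi => ?_⟩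
  · have hsu := walkOf_succ s i hi
    have hterm : ∀ j, walkOf s ⟨i + 1, by omega⟩ j - walkOf s ⟨i, by omega⟩ j
        = stepVec (s ⟨i, hi⟩) j := by
      intro j
      rw [hsu]
      show walkOf s ⟨i, by omega⟩ j + stepVec (s ⟨i, hi⟩) j - walkOf s ⟨i, by omega⟩ j = _
      ring
    simp only [hterm]
    exact sum_abs_stepVec _
  · intro hc
    have e1 := walkOf_succ s i (by omega)
    have e2 := walkOf_succ s (i + 1) (by omega)
    rw [e1, hc] at e2
    have e2' : walkOf s ⟨i, by omega⟩ + (stepVec (s ⟨i, by omega⟩) + stepVec (s ⟨i + 1, by omega⟩))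
        = walkOf s ⟨i, by omega⟩ + 0 := by
      rw [add_zero, ← add_assoc]
      exact e2.symm
    have hsum := add_left_cancel e2'
    have hneg : stepVec (s ⟨i + 1, by omega⟩) = stepVec (negIdx (s ⟨i, by omega⟩)) := by
      rw [stepVec_negIdx]
      exact eq_neg_of_add_eq_zero_right hsum
    exact hs i (by omega) (stepVec_injective hneg)

set_option maxHeartbeats 1000000 in
lemma walkOf_surj {n : ℕ} {ω : Fin (n + 2) → Fin d → ℤ} (hω : IsNBW d (n + 1) ω) :
    ∃ s : Fin (n + 1) → Idx d, NonBack s ∧ walkOf s = ω := by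
  obtain ⟨h0, hstep, hnb⟩ := hω
  have hex : ∀ i : Fin (n + 1), ∃ κ : Idx d,
      (fun j => ω ⟨(i : ℕ) + 1, by omega⟩ j - ω ⟨(i : ℕ), by omega⟩ j) = stepVec κ :=
    fun i => exists_stepVec (hstep i i.2)
  choose s hsspec using hex
  have hstepEq : ∀ i : ℕ, ∀ hi : i < n + 1, ∀ j,
      ω ⟨i + 1, by omega⟩ j = ω ⟨i, by omega⟩ j + stepVec (s ⟨i, hi⟩) j := by
    intro i hi j
    have h' := congrFun (hsspec ⟨i, hi⟩) j
    dsimp only at h'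
    omega
  have hwalk : ∀ m : ℕ, ∀ h : m < n + 2, walkOf s ⟨m, h⟩ = ω ⟨m, h⟩ := by
    intro m
    induction m with
    | zero =>
      intro h
      rw [show (⟨0, h⟩ : Fin (n + 2)) = 0 from rfl, walkOf_zero, h0]
    | succ m ih =>
      intro h
      rw [walkOf_succ s m (by omega), ih (by omega)]
      funext j
      rw [Pi.add_apply]
      exact (hstepEq m (by omega) j).symm
  refine ⟨s, ?_, funext fun i => ?_⟩
  · intro i hi hc
    apply hnb i (by omega)
    funext j
    have g1 := hstepEq i (by omega) j
    have g2 := hstepEq (i + 1) (by omega) j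
    have g3 : stepVec (s ⟨i + 1, by omega⟩) j = -stepVec (s ⟨i, by omega⟩) j := by
      rw [hc, stepVec_negIdx]
      rfl
    have g4 : ω ⟨i + 1 + 1, by omega⟩ j = ω ⟨i + 2, by omega⟩ j := rfl
    omega
  · rw [show i = ⟨(i : ℕ), i.2⟩ from rfl, hwalk i i.2]

lemma card_walks {n : ℕ} (φ : (Fin (n + 1) → Idx d) → Prop)
    (ψ : (Fin (n + 2) → (Fin d → ℤ)) → Prop)
    (hcompat : ∀ s : Fin (n + 1) → Idx d, NonBack s → (ψ (walkOf s) ↔ φ s)) :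
    Nat.card {ω : Fin (n + 2) → (Fin d → ℤ) // IsNBW d (n + 1) ω ∧ ψ ω}
      = Nat.card {s : Fin (n + 1) → Idx d // NonBack s ∧ φ s} := by
  apply Nat.card_congr
  refine (Equiv.ofBijective (fun (s : {s : Fin (n + 1) → Idx d // NonBack s ∧ φ s}) =>
    (⟨walkOf s.1, isNBW_walkOf s.2.1, (hcompat s.1 s.2.1).2 s.2.2⟩ :
      {ω : Fin (n + 2) → (Fin d → ℤ) // IsNBW d (n + 1) ω ∧ ψ ω})) ⟨?_, ?_⟩).symm
  · intro a b h
    exact Subtype.ext (walkOf_injective (congrArg Subtype.val h))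
  · rintro ⟨ω, hω, hψ⟩
    obtain ⟨s, hnb, hw⟩ := walkOf_surj hω
    exact ⟨⟨s, hnb, (hcompat s hnb).1 (hw ▸ hψ)⟩, Subtype.ext hw⟩

lemma fhat_count {E : Type*} [Fintype E] (g : E → (Fin d → ℤ)) (f : (Fin d → ℤ) → ℕ)
    (hf : ∀ x, f x = Nat.card {e : E // g e = x}) (k : Fin d → ℝ) :
    fhat f k = ∑ e : E, cexp (I * ∑ j, (k j : ℂ) * ((g e j : ℤ) : ℂ)) := by
  classical
  rw [fhat, tsum_eq_sum (s := Finset.image g Finset.univ) ?hz]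
  case hz =>
    intro x hx
    have he : IsEmpty {e : E // g e = x} := by
      constructor; rintro ⟨e, he⟩
      exact hx (Finset.mem_image.2 ⟨e, Finset.mem_univ _, he⟩)
    rw [hf x, Nat.card_of_isEmpty]
    simp
  calc ∑ x ∈ Finset.image g Finset.univ,
        (f x : ℂ) * cexp (I * ∑ j, (k j : ℂ) * ((x j : ℤ) : ℂ))
      = ∑ x ∈ Finset.image g Finset.univ, ∑ e ∈ Finset.univ.filter (fun e => g e = x),
          cexp (I * ∑ j, (k j : ℂ) * ((g e j : ℤ) : ℂ)) := by
        apply Finset.sum_congr rfl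
        intro x _
        calc (f x : ℂ) * cexp (I * ∑ j, (k j : ℂ) * ((x j : ℤ) : ℂ))
            = ((Finset.univ.filter (fun e => g e = x)).card : ℂ) *
              cexp (I * ∑ j, (k j : ℂ) * ((x j : ℤ) : ℂ)) := by
              rw [hf x, Nat.card_eq_fintype_card, Fintype.card_subtype]
          _ = ∑ _e ∈ Finset.univ.filter (fun e => g e = x),
              cexp (I * ∑ j, (k j : ℂ) * ((x j : ℤ) : ℂ)) := by
              rw [Finset.sum_const, nsmul_eq_mul]
          _ = ∑ e ∈ Finset.univ.filter (fun e => g e = x),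
              cexp (I * ∑ j, (k j : ℂ) * ((g e j : ℤ) : ℂ)) := by
              apply Finset.sum_congr rfl
              intro e he
              rw [(Finset.mem_filter.1 he).2]
    _ = ∑ e : E, cexp (I * ∑ j, (k j : ℂ) * ((g e j : ℤ) : ℂ)) :=
        Finset.sum_fiberwise_of_maps_to (fun e _ => Finset.mem_image_of_mem g (Finset.mem_univ e)) _

lemma walkOf_one {n : ℕ} (s : Fin (n + 1) → Idx d) :
    walkOf s ⟨1, by omega⟩ = stepVec (s 0) := by
  rw [walkOf_succ s 0 (by omega), show (⟨0, by omega⟩ : Fin (n + 2)) = 0 from rfl, walkOf_zero,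
    zero_add]
  rfl

lemma exp_wt {n : ℕ} (k : Fin d → ℝ) (s : Fin (n + 1) → Idx d) :
    cexp (I * ∑ j, (k j : ℂ) * (((∑ m : Fin (n + 1), stepVec (s m) j : ℤ) : ℤ) : ℂ)) = wt k s := by
  have h1 : ∑ j, (k j : ℂ) * (((∑ m : Fin (n + 1), stepVec (s m) j : ℤ) : ℤ) : ℂ)
      = ∑ m : Fin (n + 1), ((kc k (s m) : ℝ) : ℂ) := by
    have hj : ∀ j, (k j : ℂ) * (((∑ m : Fin (n + 1), stepVec (s m) j : ℤ) : ℤ) : ℂ)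
        = ∑ m : Fin (n + 1), (k j : ℂ) * ((stepVec (s m) j : ℤ) : ℂ) := by
      intro j
      push_cast
      rw [Finset.mul_sum]
    simp only [hj]
    rw [Finset.sum_comm]
    exact Finset.sum_congr rfl (fun m _ => kdot_stepVec k (s m))
  rw [h1, Finset.mul_sum, Complex.exp_sum]
  rfl

lemma fhat_bcRes (n : ℕ) (k : Fin d → ℝ) (ι : Idx d) :
    fhat (bcRes d (n + 1) ι) k = Tres d n k ι := by
  classical
  set E := {s : Fin (n + 1) → Idx d // NonBack s ∧ s 0 ≠ ι} with hE
  have hf : ∀ x, bcRes d (n + 1) ι x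
      = Nat.card {e : E // (fun j => ∑ m : Fin (n + 1), stepVec (e.1 m) j) = x} := by
    intro x
    rw [bcRes]
    rw [card_walks (fun s => ((fun j => ∑ m : Fin (n + 1), stepVec (s m) j) = x) ∧ s 0 ≠ ι)
      (fun ω => ω (Fin.last (n + 1)) = x ∧ ∀ _ : 1 ≤ n + 1, ω ⟨1, by omega⟩ ≠ stepVec ι) ?compat]
    case compat =>
      intro s _
      constructor
      · rintro ⟨hlast, hfirst⟩
        refine ⟨?_, fun hc => ?_⟩
        · funext j
          rw [← walkOf_last s j, hlast]
        · exact hfirst (by omega) (by rw [walkOf_one, hc])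
      · rintro ⟨hlast, hfirst⟩
        refine ⟨?_, fun _ hc => ?_⟩
        · funext j
          rw [walkOf_last s j, ← hlast]
        · rw [walkOf_one] at hc
          exact hfirst (stepVec_injective hc)
    apply Nat.card_congr
    exact { toFun := fun s => ⟨⟨s.1, s.2.1, s.2.2.2⟩, s.2.2.1⟩,
            invFun := fun e => ⟨e.1.1, e.1.2.1, e.2, e.1.2.2⟩,
            left_inv := fun s => rfl, right_inv := fun e => rfl }
  rw [fhat_count (fun (e : E) => (fun j => ∑ m : Fin (n + 1), stepVec (e.1 m) j)) _ hf k]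
  have hsum : ∀ e : E, cexp (I * ∑ j, (k j : ℂ) * ((∑ m : Fin (n + 1), stepVec (e.1 m) j : ℤ) : ℂ))
      = wt k e.1 := fun e => exp_wt k e.1
  rw [Finset.sum_congr rfl (fun e _ => hsum e)]
  rw [Tres, ← Finset.sum_filter]
  exact (Finset.sum_subtype _ (by intro s; simp) (fun s => wt k s)).symm

lemma fhat_bc (n : ℕ) (k : Fin d → ℝ) :
    fhat (bc d (n + 1)) k = Tall d n k := by
  classical
  set E := {s : Fin (n + 1) → Idx d // NonBack s} with hE
  have hf : ∀ x, bc d (n + 1) x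
      = Nat.card {e : E // (fun j => ∑ m : Fin (n + 1), stepVec (e.1 m) j) = x} := by
    intro x
    rw [bc]
    rw [card_walks (fun s => ((fun j => ∑ m : Fin (n + 1), stepVec (s m) j) = x))
      (fun ω => ω (Fin.last (n + 1)) = x) ?compat]
    case compat =>
      intro s _
      constructor
      · intro hlast
        funext j
        rw [← walkOf_last s j, hlast]
      · intro hlast
        funext j
        rw [walkOf_last s j, ← hlast]
    apply Nat.card_congr
    exact { toFun := fun s => ⟨⟨s.1, s.2.1⟩, s.2.2⟩,
            invFun := fun e => ⟨e.1.1, e.1.2, e.2⟩,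
            left_inv := fun s => rfl, right_inv := fun e => rfl }
  rw [fhat_count (fun (e : E) => (fun j => ∑ m : Fin (n + 1), stepVec (e.1 m) j)) _ hf k]
  have hsum : ∀ e : E, cexp (I * ∑ j, (k j : ℂ) * ((∑ m : Fin (n + 1), stepVec (e.1 m) j : ℤ) : ℂ))
      = wt k e.1 := fun e => exp_wt k e.1
  rw [Finset.sum_congr rfl (fun e _ => hsum e)]
  rw [Tall, ← Finset.sum_filter]
  exact (Finset.sum_subtype _ (by intro s; simp) (fun s => wt k s)).symm

lemma matD_mulVec_one (k : Fin d → ℝ) (ι : Idx d) :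
    (matD k *ᵥ (fun _ => (1 : ℂ))) ι = cexp (I * ((kc k ι : ℝ) : ℂ)) := by
  rw [matD, Matrix.mulVec_diagonal, mul_one]

lemma sum_exp_kc_neg (hd : d ≠ 0) (k : Fin d → ℝ) :
    ∑ κ : Idx d, cexp (I * ((-(kc k κ) : ℝ) : ℂ)) = 2 * (((d : ℝ) * Dhat k : ℝ) : ℂ) := by
  rw [← Equiv.sum_comp (negIdxEquiv d) (fun κ => cexp (I * ((-(kc k κ) : ℝ) : ℂ)))]
  rw [← sum_exp_kc hd k]
  apply Finset.sum_congr rfl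
  intro κ _
  have : kc k ((negIdxEquiv d) κ) = -kc k κ := kc_negIdx k κ
  rw [this]
  norm_num

theorem nbw_double_root' (d : ℕ) (hd : 2 ≤ d) (k : Fin d → ℝ)
    (hk : ∀ j, k j ∈ Set.Ioo (-Real.pi) Real.pi)
    (hdisc : ((d : ℝ) * Dhat k) ^ 2 = 2 * d - 1) :
    matA k *ᵥ (fun _ => (1 : ℂ)) =
      ((((d : ℝ) * Dhat k : ℝ) : ℂ) • (fun _ => (1 : ℂ)) - matD k *ᵥ fun _ => (1 : ℂ)) +
        (((d : ℝ) * Dhat k : ℝ) : ℂ) • (fun _ => (1 : ℂ)) ∧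
    (∀ n : ℕ, 1 ≤ n →
      bvec d n k =
        (((n : ℂ) + 1) * (((d : ℝ) * Dhat k : ℝ) : ℂ) ^ n) • (fun _ => (1 : ℂ)) -
          ((n : ℂ) * (((d : ℝ) * Dhat k : ℝ) : ℂ) ^ (n - 1)) •
            (matD k *ᵥ fun _ => (1 : ℂ))) ∧
    (∀ n : ℕ, 2 ≤ n →
      bhat d n k =
        2 * d * ((n : ℂ) * (Dhat k : ℂ) * (((d : ℝ) * Dhat k : ℝ) : ℂ) ^ (n - 1) -
          ((n : ℂ) - 1) * (((d : ℝ) * Dhat k : ℝ) : ℂ) ^ (n - 2))) := by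
  have hd0 : d ≠ 0 := by omega
  set L : ℂ := (((d : ℝ) * Dhat k : ℝ) : ℂ) with hL
  have hl : L ^ 2 = 2 * (d : ℂ) - 1 := by
    rw [hL]
    exact_mod_cast congrArg (fun t : ℝ => (t : ℂ)) hdisc
  have hLd : L = (d : ℂ) * ((Dhat k : ℝ) : ℂ) := by rw [hL]; push_cast; ring
  refine ⟨?_, ?_, ?_⟩
  · funext ι
    have entry : ∀ κ : Idx d, matA k ι κ
        = ((1 : ℂ) - if ι.1 = -κ.1 then 1 else 0) * cexp (I * ((-(kc k κ) : ℝ) : ℂ)) := by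
      intro κ
      rw [matA, matD, Matrix.mul_diagonal, Matrix.sub_apply]
      rw [kc_neg]
      rfl
    have lhs : (matA k *ᵥ (fun _ => (1 : ℂ))) ι
        = ∑ κ : Idx d, ((1 : ℂ) - if ι.1 = -κ.1 then 1 else 0) * cexp (I * ((-(kc k κ) : ℝ) : ℂ)) := by
      show ∑ κ : Idx d, matA k ι κ * 1 = _
      simp only [mul_one]
      exact Finset.sum_congr rfl (fun κ _ => entry κ)
    have split : ∀ κ : Idx d, ((1 : ℂ) - if ι.1 = -κ.1 then 1 else 0) * cexp (I * ((-(kc k κ) : ℝ) : ℂ))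
        = cexp (I * ((-(kc k κ) : ℝ) : ℂ)) - (if κ = negIdx ι then cexp (I * ((-(kc k κ) : ℝ) : ℂ)) else 0) := by
      intro κ
      have hcond : (ι.1 = -κ.1) ↔ (κ = negIdx ι) := by
        rw [Subtype.ext_iff]
        show ι.1 = -κ.1 ↔ κ.1 = -ι.1
        omega
      by_cases hc : κ = negIdx ι
      · rw [if_pos (hcond.2 hc), if_pos hc]; ring
      · rw [if_neg (fun h => hc (hcond.1 h)), if_neg hc]; ring
    rw [lhs]
    simp only [split]
    rw [Finset.sum_sub_distrib, sum_exp_kc_neg hd0 k, ← hL,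
      Finset.sum_ite_eq' Finset.univ (negIdx ι) (fun κ => cexp (I * ((-(kc k κ) : ℝ) : ℂ)))]
    have hkcn : (-(kc k (negIdx ι)) : ℝ) = kc k ι := by rw [kc_negIdx]; ring
    rw [if_pos (Finset.mem_univ _), hkcn]
    show _ = (L * 1 - (matD k *ᵥ fun _ => (1:ℂ)) ι) + L * 1
    rw [matD_mulVec_one]
    ring
  · intro n hn
    obtain ⟨m, rfl⟩ : ∃ m, n = m + 1 := ⟨n - 1, by omega⟩
    funext ι
    show fhat (bcRes d (m + 1) ι) k = _
    rw [fhat_bcRes m k ι, Tres_formula hd0 k (hL ▸ hl) m ι, ← hL]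
    have hsub : (m + 1 : ℕ) - 1 = m := by omega
    simp only [Pi.sub_apply, Pi.smul_apply, smul_eq_mul, matD_mulVec_one, mul_one, hsub]
    push_cast
    ring
  · intro n hn
    obtain ⟨m, rfl⟩ : ∃ m, n = m + 2 := ⟨n - 2, by omega⟩
    show fhat (bc d (m + 2)) k = _
    rw [fhat_bc (m + 1) k, Tall_formula hd0 k (hL ▸ hl) m, ← hL]
    have h1 : (m + 2 : ℕ) - 1 = m + 1 := by omega
    have h2 : (m + 2 : ℕ) - 2 = m := by omega
    rw [h1, h2]
    push_cast
    linear_combination 2 * ((m : ℂ) + 2) * L ^ (m + 1) * hLd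

end NBWaux

/-- the degenerate case `(d·D̂(k))² = 2d−1`, with double root `λ = d·D̂(k)`:
`A[k]·1⃗ = (λ·1⃗ − D[k]·1⃗) + λ·1⃗`, and the resulting formulas for `b⃗_n(k)` and `b̂_n(k)`. -/
theorem nbw_double_root (d : ℕ) (hd : 2 ≤ d) (k : Fin d → ℝ)
    (hk : ∀ j, k j ∈ Set.Ioo (-Real.pi) Real.pi)
    (hdisc : ((d : ℝ) * Dhat k) ^ 2 = 2 * d - 1) :
    matA k *ᵥ (fun _ => (1 : ℂ)) =
      ((((d : ℝ) * Dhat k : ℝ) : ℂ) • (fun _ => (1 : ℂ)) - matD k *ᵥ fun _ => (1 : ℂ)) +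
        (((d : ℝ) * Dhat k : ℝ) : ℂ) • (fun _ => (1 : ℂ)) ∧
    (∀ n : ℕ, 1 ≤ n →
      bvec d n k =
        (((n : ℂ) + 1) * (((d : ℝ) * Dhat k : ℝ) : ℂ) ^ n) • (fun _ => (1 : ℂ)) -
          ((n : ℂ) * (((d : ℝ) * Dhat k : ℝ) : ℂ) ^ (n - 1)) •
            (matD k *ᵥ fun _ => (1 : ℂ))) ∧
    (∀ n : ℕ, 2 ≤ n →
      bhat d n k =
        2 * d * ((n : ℂ) * (Dhat k : ℂ) * (((d : ℝ) * Dhat k : ℝ) : ℂ) ^ (n - 1) -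
          ((n : ℂ) - 1) * (((d : ℝ) * Dhat k : ℝ) : ℂ) ^ (n - 2))) := by
  exact NBWaux.nbw_double_root' d hd k hk hdisc

end
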